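/- Let M and M' be matroids on the same ground set E such that M is a quotient of M' (every flat of M is a flat of M'; equivalently, every basis of M is contained in a basis of M' and every basis of M' contains a basis of M, for the case of matroid quotients). Then the dual matroid M'* is a quotient of M*. -/

import Mathlib

/-- `M` is a quotient of `M'`: every basis of `M` is contained in some basis of `M'`,
and every basis of `M'` contains some basis of `M`. -/
def MatroidQuot {α : Type*} (M M' : Matroid α) : Prop :=
  (∀ B, M.IsBase B → ∃ B', M'.IsBase B' ∧ B ⊆ B') ∧
  (∀ B', M'.IsBase B' → ∃ B, M.IsBase B ∧ B ⊆ B')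

/-- If `M` is a quotient of `M'` (on the same ground set), then the dual `M'✶`
is a quotient of `M✶`. -/
theorem dual_quotient_of_quotient {α : Type*} (M M' : Matroid α)
    (hE : M.E = M'.E) (h : MatroidQuot M M') :
    MatroidQuot M'✶ M✶ := by
  obtain ⟨h1, h2⟩ := h
  constructor
  · intro B hB
    rw [Matroid.dual_isBase_iff'] at hB
    obtain ⟨hB', hBE⟩ := hB
    obtain ⟨B₀, hB₀, hsub⟩ := h2 _ hB'
    refine ⟨M.E \ B₀, hB₀.compl_isBase_dual, fun x hx => ⟨hE ▸ hBE hx, fun hxB₀ => (hsub hxB₀).2 hx⟩⟩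
  · intro B hB
    rw [Matroid.dual_isBase_iff'] at hB
    obtain ⟨hB', hBE⟩ := hB
    obtain ⟨B₀, hB₀, hsub⟩ := h1 _ hB'
    refine ⟨M'.E \ B₀, hB₀.compl_isBase_dual, fun x hx => ?_⟩
    by_contra hxB
    exact hx.2 (hsub ⟨hE ▸ hx.1, hxB⟩)
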